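/- With $D = \frac{e^{1-\gamma/2}}{\sqrt{2}}$ and $R_n$ defined via the blocks $B_k$ as above, for every $n \ge 2$ one has $R_{n+1} - R_n \le \left(2\sqrt{2} - 4e^{\gamma/2 - 1}\right) n^{\log_2\left(2^{-3/2}e^{1-\gamma/2}\right)}$. -/

import Mathlib

open Real

noncomputable def Rseq (D : ℝ) (n : ℕ) : ℝ :=
  if n ≤ 1 then 1
  else Real.sqrt 2 * (D ^ (Nat.clog 2 n - 1) +
    ((n : ℝ) - 2 ^ (Nat.clog 2 n - 1) - 1) *
      (D ^ Nat.clog 2 n - D ^ (Nat.clog 2 n - 1)) / 2 ^ (Nat.clog 2 n - 1))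

lemma Rseq_diff_eq (D : ℝ) (n : ℕ) (hn : 2 ≤ n) :
    Rseq D (n + 1) - Rseq D n =
      Real.sqrt 2 * (D ^ Nat.clog 2 n - D ^ (Nat.clog 2 n - 1)) /
        2 ^ (Nat.clog 2 n - 1) := by
  have h1 : 1 < n := hn
  have hk : 0 < Nat.clog 2 n := Nat.clog_pos one_lt_two h1
  set k := Nat.clog 2 n with hkdef
  have hnle : n ≤ 2 ^ k := Nat.le_pow_clog one_lt_two n
  have hlt : 2 ^ (k - 1) < n := Nat.pow_pred_clog_lt_self one_lt_two h1
  have hn1 : ¬ n ≤ 1 := by omega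
  have hn11 : ¬ n + 1 ≤ 1 := by omega
  rcases lt_or_eq_of_le hnle with hlt2 | heq
  · -- n + 1 in same block
    have hc : Nat.clog 2 (n + 1) = k := by
      have h2 : Nat.clog 2 (n + 1) ≤ k := (Nat.clog_le_iff_le_pow one_lt_two).2 (by omega)
      have h3 : k - 1 < Nat.clog 2 (n + 1) := (Nat.lt_clog_iff_pow_lt one_lt_two).2 (by omega)
      omega
    simp only [Rseq, if_neg hn1, if_neg hn11, hc, ← hkdef]
    push_cast
    ring
  · -- n = 2 ^ k, next block starts
    have hc : Nat.clog 2 (n + 1) = k + 1 := by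
      have h3 : k < Nat.clog 2 (n + 1) := (Nat.lt_clog_iff_pow_lt one_lt_two).2 (by omega)
      have h2 : Nat.clog 2 (n + 1) ≤ k + 1 := (Nat.clog_le_iff_le_pow one_lt_two).2 (by
        have : 2 ^ k + 2 ^ k = 2 ^ (k + 1) := by ring
        omega)
      omega
    have hkk : k - 1 + 1 = k := by omega
    have hcast : (n : ℝ) = 2 ^ k := by exact_mod_cast heq
    obtain ⟨m, hm⟩ : ∃ m, k = m + 1 := ⟨k - 1, by omega⟩
    simp only [Rseq, if_neg hn1, if_neg hn11, hc, ← hkdef, Nat.add_sub_cancel, hm,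
      Nat.add_sub_cancel]
    push_cast
    rw [hcast, hm]
    have hpos : (2 : ℝ) ^ m ≠ 0 := by positivity
    field_simp
    ring

theorem Rseq_diff_le (n : ℕ) (hn : 2 ≤ n) :
    Rseq (Real.exp (1 - Real.eulerMascheroniConstant / 2) / Real.sqrt 2) (n + 1) -
        Rseq (Real.exp (1 - Real.eulerMascheroniConstant / 2) / Real.sqrt 2) n ≤
      (2 * Real.sqrt 2 - 4 * Real.exp (Real.eulerMascheroniConstant / 2 - 1)) *
        (n : ℝ) ^ (Real.logb 2 ((2 : ℝ) ^ (-(3 : ℝ) / 2) *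
          Real.exp (1 - Real.eulerMascheroniConstant / 2))) := by
  set γ := Real.eulerMascheroniConstant with hγ
  set E := Real.exp (1 - γ / 2) with hE
  set D := E / Real.sqrt 2 with hD
  have hsqrt2 : (0:ℝ) < Real.sqrt 2 := by positivity
  have hs2 : Real.sqrt 2 * Real.sqrt 2 = 2 := Real.mul_self_sqrt (by norm_num)
  have hs2lt : Real.sqrt 2 < 3 / 2 := by
    nlinarith [Real.sq_sqrt (show (0:ℝ) ≤ 2 by norm_num), Real.sqrt_nonneg 2]
  have hγlt : γ < 2 / 3 := Real.eulerMascheroniConstant_lt_two_thirds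
  have hγpos : 0 < γ := lt_trans (by norm_num) Real.one_half_lt_eulerMascheroniConstant
  have hEpos : 0 < E := Real.exp_pos _
  have hE53 : 5 / 3 < E := by
    have := Real.add_one_le_exp (1 - γ / 2)
    have : 2 - γ / 2 ≤ E := by linarith
    linarith
  have hD1 : 1 < D := by
    rw [hD, lt_div_iff₀ hsqrt2]
    nlinarith
  have hDlt2 : D < 2 := by
    rw [hD, div_lt_iff₀ hsqrt2]
    have hE3 : E < 2.72 := by
      have h1 : (1 : ℝ) - γ / 2 < 1 := by linarith
      calc E < Real.exp 1 := Real.exp_lt_exp.mpr h1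
        _ < 2.7182818286 := Real.exp_one_lt_d9
        _ < 2.72 := by norm_num
    have hs2gt : 1.4 < Real.sqrt 2 := by
      nlinarith [Real.sq_sqrt (show (0:ℝ) ≤ 2 by norm_num), Real.sqrt_nonneg 2]
    nlinarith
  -- identify the exponent argument with D / 2
  have harg : (2 : ℝ) ^ (-(3 : ℝ) / 2) * E = D / 2 := by
    have h32 : (2 : ℝ) ^ ((3 : ℝ) / 2) = 2 * Real.sqrt 2 := by
      have : (3 : ℝ) / 2 = 1 + 1 / 2 := by norm_num
      rw [this, Real.rpow_add (by norm_num), Real.rpow_one,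
        ← Real.sqrt_eq_rpow]
    have hne : (2 : ℝ) ^ ((3 : ℝ) / 2) ≠ 0 := by positivity
    rw [show (-(3:ℝ)/2) = -((3:ℝ)/2) by ring, Real.rpow_neg (by norm_num), h32, hD]
    rw [mul_inv, mul_comm]
    field_simp
  rw [harg]
  set c := Real.logb 2 (D / 2) with hc
  have hD2pos : (0:ℝ) < D / 2 := by linarith
  have h2c : (2 : ℝ) ^ c = D / 2 :=
    Real.rpow_logb (by norm_num) (by norm_num) hD2pos
  have hcneg : c ≤ 0 := by
    rw [hc]
    apply Real.logb_nonpos (by norm_num) (by positivity)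
    linarith
  set k := Nat.clog 2 n with hk
  have hk1 : 0 < k := Nat.clog_pos one_lt_two hn
  have hnle : n ≤ 2 ^ k := Nat.le_pow_clog one_lt_two n
  rw [Rseq_diff_eq D n hn, ← hk]
  -- LHS = √2 (D-1) (D/2)^(k-1)
  have hlhs : Real.sqrt 2 * (D ^ k - D ^ (k - 1)) / 2 ^ (k - 1) =
      Real.sqrt 2 * (D - 1) * (2 / D) * (D / 2) ^ k := by
    have hkk : k - 1 + 1 = k := by omega
    have hDpos : (0:ℝ) < D := by linarith
    rw [← hkk]
    field_simp
    rw [Nat.add_sub_cancel]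
    have key : ∀ x : ℝ, (x ^ (k - 1 + 1) - x ^ (k - 1)) * x =
        2 ^ (k - 1) * (x - 1) * 2 * (x / 2) ^ (k - 1 + 1) := by
      intro x
      rw [div_pow]
      field_simp
      ring
    exact key D
  rw [hlhs]
  -- (D/2)^k ≤ n^c
  have hmono : (D / 2) ^ k ≤ (n : ℝ) ^ c := by
    have h1 : ((2 : ℝ) ^ k) ^ c = (D / 2) ^ k := by
      rw [← Real.rpow_natCast (2:ℝ) k, ← Real.rpow_mul (by norm_num),
        mul_comm, Real.rpow_mul (by norm_num), h2c, Real.rpow_natCast]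
    rw [← h1]
    apply Real.rpow_le_rpow_of_nonpos (by positivity) _ hcneg
    exact_mod_cast hnle
  have hconstpos : 0 < Real.sqrt 2 * (D - 1) * (2 / D) := by
    apply mul_pos (mul_pos hsqrt2 (by linarith))
    positivity
  have hconst : Real.sqrt 2 * (D - 1) * (2 / D) =
      2 * Real.sqrt 2 - 4 * Real.exp (γ / 2 - 1) := by
    have hexp : Real.exp (γ / 2 - 1) = 1 / E := by
      rw [show γ / 2 - 1 = -(1 - γ / 2) by ring, Real.exp_neg, one_div]
    rw [hexp, hD]
    have hEne : E ≠ 0 := ne_of_gt hEpos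
    field_simp
    nlinarith
  calc Real.sqrt 2 * (D - 1) * (2 / D) * (D / 2) ^ k
      ≤ Real.sqrt 2 * (D - 1) * (2 / D) * (n : ℝ) ^ c := by
        exact mul_le_mul_of_nonneg_left hmono (le_of_lt hconstpos)
    _ = (2 * Real.sqrt 2 - 4 * Real.exp (γ / 2 - 1)) * (n : ℝ) ^ c := by rw [hconst]
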